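/- Tchebyshev/Markov system property: if f is a real-valued, nonvanishing continuous function on [-b,b], then for every n the functions φ_0, …, φ_n of the recursive-integral system built from f are linearly independent, and every nontrivial linear combination ∑_{k=0}^n c_k φ_k has at most n zeros in [-b,b]. -/

import Mathlib

/-- The recursive integrals `X̃⁽ⁿ⁾` (real-valued case). -/
noncomputable def XtR (f : ℝ → ℝ) (x₀ : ℝ) : ℕ → ℝ → ℝ
  | 0 => fun _ => 1
  | n + 1 => fun x => (n + 1 : ℝ) * ∫ s in x₀..x, XtR f x₀ n s * (f s ^ 2) ^ ((-1 : ℤ) ^ n)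

/-- The recursive integrals `X⁽ⁿ⁾` (real-valued case). -/
noncomputable def XrR (f : ℝ → ℝ) (x₀ : ℝ) : ℕ → ℝ → ℝ
  | 0 => fun _ => 1
  | n + 1 => fun x => (n + 1 : ℝ) * ∫ s in x₀..x, XrR f x₀ n s * (f s ^ 2) ^ ((-1 : ℤ) ^ (n + 1))

/-- The system `φ_k` (real-valued case). -/
noncomputable def phiSysR (f : ℝ → ℝ) (x₀ : ℝ) (k : ℕ) (x : ℝ) : ℝ :=
  if k % 2 = 1 then f x * XrR f x₀ k x else f x * XtR f x₀ k x

section TchebAux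
open Set MeasureTheory intervalIntegral

lemma hasDerivAt_primitive {h : ℝ → ℝ} (hh : Continuous h) (x₀ t : ℝ) :
    HasDerivAt (fun x => ∫ s in x₀..x, h s) (h t) t :=
  intervalIntegral.integral_hasDerivAt_right (hh.intervalIntegrable _ _)
    hh.stronglyMeasurable.stronglyMeasurableAtFilter hh.continuousAt

lemma XrR_succ (f : ℝ → ℝ) (x₀ : ℝ) (n : ℕ) : XrR f x₀ (n+1) =
    fun x => ((n:ℝ) + 1) * ∫ s in x₀..x, XrR f x₀ n s * (f s ^ 2) ^ ((-1 : ℤ) ^ (n + 1)) := rfl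

lemma XtR_succ (f : ℝ → ℝ) (x₀ : ℝ) (n : ℕ) : XtR f x₀ (n+1) =
    fun x => ((n:ℝ) + 1) * ∫ s in x₀..x, XtR f x₀ n s * (f s ^ 2) ^ ((-1 : ℤ) ^ n) := rfl

lemma XrR_props (f : ℝ → ℝ) (hf : Continuous f) (hf0 : ∀ x, f x ≠ 0) (x₀ : ℝ) :
    ∀ n, Continuous (XrR f x₀ n) ∧ ∀ t, HasDerivAt (XrR f x₀ (n+1))
      (((n:ℝ)+1) * (XrR f x₀ n t * (f t ^ 2) ^ ((-1:ℤ) ^ (n+1)))) t := by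
  have key : ∀ n, Continuous (XrR f x₀ n) → ∀ t, HasDerivAt (XrR f x₀ (n+1))
      (((n:ℝ)+1) * (XrR f x₀ n t * (f t ^ 2) ^ ((-1:ℤ) ^ (n+1)))) t := by
    intro n hcont t
    have hg : Continuous (fun s => XrR f x₀ n s * (f s ^ 2) ^ ((-1:ℤ) ^ (n+1))) :=
      hcont.mul ((hf.pow 2).zpow₀ _ (fun a => Or.inl (pow_ne_zero 2 (hf0 a))))
    rw [XrR_succ]
    exact (hasDerivAt_primitive hg x₀ t).const_mul ((n:ℝ)+1)
  intro n
  induction n with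
  | zero =>
    have h0 : Continuous (XrR f x₀ 0) := continuous_const
    exact ⟨h0, key 0 h0⟩
  | succ n ih =>
    have hcont : Continuous (XrR f x₀ (n+1)) :=
      (Differentiable.continuous (fun t => (ih.2 t).differentiableAt))
    exact ⟨hcont, key (n+1) hcont⟩

lemma XtR_props (f : ℝ → ℝ) (hf : Continuous f) (hf0 : ∀ x, f x ≠ 0) (x₀ : ℝ) :
    ∀ n, Continuous (XtR f x₀ n) ∧ ∀ t, HasDerivAt (XtR f x₀ (n+1))
      (((n:ℝ)+1) * (XtR f x₀ n t * (f t ^ 2) ^ ((-1:ℤ) ^ n))) t := by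
  have key : ∀ n, Continuous (XtR f x₀ n) → ∀ t, HasDerivAt (XtR f x₀ (n+1))
      (((n:ℝ)+1) * (XtR f x₀ n t * (f t ^ 2) ^ ((-1:ℤ) ^ n))) t := by
    intro n hcont t
    have hg : Continuous (fun s => XtR f x₀ n s * (f s ^ 2) ^ ((-1:ℤ) ^ n)) :=
      hcont.mul ((hf.pow 2).zpow₀ _ (fun a => Or.inl (pow_ne_zero 2 (hf0 a))))
    rw [XtR_succ]
    exact (hasDerivAt_primitive hg x₀ t).const_mul ((n:ℝ)+1)
  intro n
  induction n with
  | zero =>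
    have h0 : Continuous (XtR f x₀ 0) := continuous_const
    exact ⟨h0, key 0 h0⟩
  | succ n ih =>
    have hcont : Continuous (XtR f x₀ (n+1)) :=
      Differentiable.continuous (fun t => (ih.2 t).differentiableAt)
    exact ⟨hcont, key (n+1) hcont⟩

lemma X_swap (f : ℝ → ℝ) (x₀ : ℝ) :
    ∀ n, XtR (fun x => (f x)⁻¹) x₀ n = XrR f x₀ n ∧ XrR (fun x => (f x)⁻¹) x₀ n = XtR f x₀ n := by
  intro n
  induction n with
  | zero => exact ⟨rfl, rfl⟩
  | succ n ih =>
    have e1 : ∀ s : ℝ, ((f s)⁻¹ ^ 2) ^ ((-1:ℤ) ^ n) = (f s ^ 2) ^ ((-1:ℤ) ^ (n+1)) := by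
      intro s
      rw [inv_pow, inv_zpow']
      congr 1
      rw [pow_succ]
      ring
    have e2 : ∀ s : ℝ, ((f s)⁻¹ ^ 2) ^ ((-1:ℤ) ^ (n+1)) = (f s ^ 2) ^ ((-1:ℤ) ^ n) := by
      intro s
      rw [inv_pow, inv_zpow']
      congr 1
      rw [pow_succ]
      ring
    constructor
    · rw [XtR_succ, XrR_succ]
      have hi : (fun s => XtR (fun x => (f x)⁻¹) x₀ n s * ((f s)⁻¹ ^ 2) ^ ((-1:ℤ) ^ n))
          = fun s => XrR f x₀ n s * (f s ^ 2) ^ ((-1:ℤ) ^ (n+1)) := by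
        funext s; rw [ih.1, e1 s]
      rw [hi]
    · rw [XtR_succ, XrR_succ]
      have hi : (fun s => XrR (fun x => (f x)⁻¹) x₀ n s * ((f s)⁻¹ ^ 2) ^ ((-1:ℤ) ^ (n+1)))
          = fun s => XtR f x₀ n s * (f s ^ 2) ^ ((-1:ℤ) ^ n) := by
        funext s; rw [ih.2, e2 s]
      rw [hi]

lemma XrR_congr (f g : ℝ → ℝ) (a b x₀ : ℝ) (hx₀ : x₀ ∈ Set.Icc a b)
    (hfg : Set.EqOn f g (Set.Icc a b)) :
    ∀ n, ∀ x ∈ Set.Icc a b, XrR f x₀ n x = XrR g x₀ n x := by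
  intro n
  induction n with
  | zero => intro x _; rfl
  | succ n ih =>
    intro x hx
    rw [XrR_succ, XrR_succ]
    dsimp only
    congr 1
    apply intervalIntegral.integral_congr
    intro s hs
    have hsI : s ∈ Set.Icc a b := Set.uIcc_subset_Icc hx₀ hx hs
    dsimp only
    rw [ih s hsI, hfg hsI]

lemma XtR_congr (f g : ℝ → ℝ) (a b x₀ : ℝ) (hx₀ : x₀ ∈ Set.Icc a b)
    (hfg : Set.EqOn f g (Set.Icc a b)) :
    ∀ n, ∀ x ∈ Set.Icc a b, XtR f x₀ n x = XtR g x₀ n x := by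
  intro n
  induction n with
  | zero => intro x _; rfl
  | succ n ih =>
    intro x hx
    rw [XtR_succ, XtR_succ]
    dsimp only
    congr 1
    apply intervalIntegral.integral_congr
    intro s hs
    have hsI : s ∈ Set.Icc a b := Set.uIcc_subset_Icc hx₀ hx hs
    dsimp only
    rw [ih s hsI, hfg hsI]

lemma phiSysR_congr (f g : ℝ → ℝ) (a b x₀ : ℝ) (hx₀ : x₀ ∈ Set.Icc a b)
    (hfg : Set.EqOn f g (Set.Icc a b)) (n : ℕ) (x : ℝ) (hx : x ∈ Set.Icc a b) :
    phiSysR f x₀ n x = phiSysR g x₀ n x := by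
  unfold phiSysR
  split_ifs
  · rw [XrR_congr f g a b x₀ hx₀ hfg n x hx, hfg hx]
  · rw [XtR_congr f g a b x₀ hx₀ hfg n x hx, hfg hx]

lemma Xc_deriv (f : ℝ → ℝ) (hf : Continuous f) (hf0 : ∀ x, f x ≠ 0) (x₀ : ℝ) (j : ℕ) (t : ℝ) :
    HasDerivAt (fun y => if (j+1) % 2 = 1 then XrR f x₀ (j+1) y else XtR f x₀ (j+1) y)
      (((j:ℝ)+1) * ((if j % 2 = 1 then XtR f x₀ j t else XrR f x₀ j t) * ((f t)^2)⁻¹)) t := by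
  rcases Nat.even_or_odd j with hj | hj
  · have hj0 : j % 2 = 0 := Nat.even_iff.mp hj
    have hmod1 : (j+1) % 2 = 1 := by omega
    have hexp : ((-1:ℤ))^(j+1) = -1 := hj.add_one.neg_one_pow
    have h := (XrR_props f hf hf0 x₀ j).2 t
    rw [hexp, zpow_neg_one] at h
    simp only [hmod1, hj0, reduceIte]
    exact h
  · have hj1 : j % 2 = 1 := Nat.odd_iff.mp hj
    have hmod0 : (j+1) % 2 = 0 := by omega
    have hexp : ((-1:ℤ))^j = -1 := hj.neg_one_pow
    have h := (XtR_props f hf hf0 x₀ j).2 t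
    rw [hexp, zpow_neg_one] at h
    simp only [hmod0, hj1, reduceIte]
    exact h

lemma key_lemma : ∀ n : ℕ, ∀ f : ℝ → ℝ, Continuous f → (∀ x, f x ≠ 0) → ∀ x₀ : ℝ, ∀ c : ℕ → ℝ,
    (∃ k, k ≤ n ∧ c k ≠ 0) → ∀ s : Finset ℝ,
    (∀ x ∈ s, ∑ k ∈ Finset.range (n + 1), c k * phiSysR f x₀ k x = 0) → s.card ≤ n := by
  intro n
  induction n with
  | zero =>
    intro f hf hf0 x₀ c hc s hs
    obtain ⟨k, hk, hck⟩ := hc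
    have hk0 : k = 0 := Nat.le_zero.mp hk
    subst hk0
    rw [Nat.le_zero, Finset.card_eq_zero]
    apply Finset.eq_empty_of_forall_notMem
    intro x hx
    have h1 := hs x hx
    rw [Finset.sum_range_one] at h1
    have hphi : phiSysR f x₀ 0 x = f x := by
      show (if 0 % 2 = 1 then f x * XrR f x₀ 0 x else f x * XtR f x₀ 0 x) = f x
      norm_num
      show f x * 1 = f x
      ring
    rw [hphi] at h1
    exact mul_ne_zero hck (hf0 x) h1
  | succ n ih =>
    intro f hf hf0 x₀ c hc s hs
    by_cases hC : ∀ k, 1 ≤ k → k ≤ n + 1 → c k = 0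
    · -- the combination is c 0 * f, which never vanishes
      have hc0 : c 0 ≠ 0 := by
        obtain ⟨k, hk, hck⟩ := hc
        rcases Nat.eq_zero_or_pos k with rfl | hk1
        · exact hck
        · exact absurd (hC k hk1 hk) hck
      have hse : s = ∅ := by
        apply Finset.eq_empty_of_forall_notMem
        intro x hx
        have h1 := hs x hx
        have h2 : ∑ k ∈ Finset.range (n + 1 + 1), c k * phiSysR f x₀ k x
            = c 0 * phiSysR f x₀ 0 x := by
          apply Finset.sum_eq_single_of_mem 0 (by simp)
          intro k hkmem hk0
          have : c k = 0 := hC k (by omega) (by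
            have := Finset.mem_range.mp hkmem; omega)
          rw [this, zero_mul]
        rw [h2] at h1
        have hphi : phiSysR f x₀ 0 x = f x := by
          show (if 0 % 2 = 1 then f x * XrR f x₀ 0 x else f x * XtR f x₀ 0 x) = f x
          norm_num
          show f x * 1 = f x
          ring
        rw [hphi] at h1
        exact mul_ne_zero hc0 (hf0 x) h1
      rw [hse]; simp
    · push_neg at hC
      obtain ⟨k₀, hk₀1, hk₀n, hck₀⟩ := hC
      -- the reduced system for 1/f
      set finv : ℝ → ℝ := fun x => (f x)⁻¹ with hfinvdef
      have hfinvc : Continuous finv := hf.inv₀ hf0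
      have hfinv0 : ∀ x, finv x ≠ 0 := fun x => inv_ne_zero (hf0 x)
      set c' : ℕ → ℝ := fun j => ((j : ℝ) + 1) * c (j + 1) with hc'def
      have hc'nz : ∃ j, j ≤ n ∧ c' j ≠ 0 := by
        refine ⟨k₀ - 1, by omega, ?_⟩
        have hkk : k₀ - 1 + 1 = k₀ := by omega
        have : c' (k₀ - 1) = (((k₀ - 1 : ℕ) : ℝ) + 1) * c k₀ := by
          rw [hc'def]; dsimp only; rw [hkk]
        rw [this]
        exact mul_ne_zero (by positivity) hck₀
      set G : ℝ → ℝ := fun x => ∑ j ∈ Finset.range (n + 1), c' j * phiSysR finv x₀ j x with hGdef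
      set g : ℝ → ℝ := fun x => ∑ k ∈ Finset.range (n + 2),
        c k * (if k % 2 = 1 then XrR f x₀ k x else XtR f x₀ k x) with hgdef
      -- factorization F = f * g
      have hfact : ∀ x, ∑ k ∈ Finset.range (n + 1 + 1), c k * phiSysR f x₀ k x = f x * g x := by
        intro x
        rw [hgdef, Finset.mul_sum]
        apply Finset.sum_congr rfl
        intro k _
        unfold phiSysR
        split_ifs <;> ring
      -- derivative of g
      have hgderiv : ∀ t, HasDerivAt g (finv t * G t) t := by
        intro t
        have hsum : HasDerivAt g (∑ k ∈ Finset.range (n + 2),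
            (if k = 0 then 0 else c k * (((k - 1 : ℕ) : ℝ) + 1) *
              ((if (k - 1) % 2 = 1 then XtR f x₀ (k - 1) t else XrR f x₀ (k - 1) t)
                * ((f t)^2)⁻¹))) t := by
          rw [hgdef]
          apply HasDerivAt.fun_sum
          intro k _
          rcases k with _ | j
          · simp only [reduceIte]
            have he : (fun y => c 0 * (if 0 % 2 = 1 then XrR f x₀ 0 y else XtR f x₀ 0 y))
                = fun _ => c 0 * 1 := rfl
            rw [he]
            exact hasDerivAt_const t _
          · simp only [Nat.succ_ne_zero, reduceIte, Nat.succ_sub_one]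
            have h := (Xc_deriv f hf hf0 x₀ j t).const_mul (c (j + 1))
            have : c (j + 1) * (((j:ℝ)+1) *
                ((if j % 2 = 1 then XtR f x₀ j t else XrR f x₀ j t) * ((f t)^2)⁻¹))
              = c (j + 1) * (((j:ℕ):ℝ) + 1) *
                ((if j % 2 = 1 then XtR f x₀ j t else XrR f x₀ j t) * ((f t)^2)⁻¹) := by ring
            rw [this] at h
            exact h
        have hval : (∑ k ∈ Finset.range (n + 2),
            (if k = 0 then 0 else c k * (((k - 1 : ℕ) : ℝ) + 1) *
              ((if (k - 1) % 2 = 1 then XtR f x₀ (k - 1) t else XrR f x₀ (k - 1) t)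
                * ((f t)^2)⁻¹))) = finv t * G t := by
          rw [Finset.sum_range_succ']
          simp only [reduceIte, Nat.succ_ne_zero, Nat.succ_sub_one, add_zero]
          rw [hGdef, Finset.mul_sum]
          apply Finset.sum_congr rfl
          intro j _
          have hphi : phiSysR finv x₀ j t
              = finv t * (if j % 2 = 1 then XtR f x₀ j t else XrR f x₀ j t) := by
            unfold phiSysR
            rcases Nat.even_or_odd j with hj | hj
            · have hj0 : ¬ (j % 2 = 1) := by
                have := Nat.even_iff.mp hj; omega
              rw [if_neg hj0, if_neg hj0, hfinvdef, (X_swap f x₀ j).1]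
            · have hj1 : j % 2 = 1 := Nat.odd_iff.mp hj
              rw [if_pos hj1, if_pos hj1, hfinvdef, (X_swap f x₀ j).2]
          rw [hphi, hc'def]
          have hft : ((f t)^2)⁻¹ = (f t)⁻¹ * (f t)⁻¹ := by
            rw [pow_two, mul_inv_rev]
          rw [hft, hfinvdef]
          ring
        rw [hval] at hsum
        exact hsum
      -- Rolle step
      have hrolle : ∀ x y, x < y →
          (∑ k ∈ Finset.range (n + 1 + 1), c k * phiSysR f x₀ k x = 0) →
          (∑ k ∈ Finset.range (n + 1 + 1), c k * phiSysR f x₀ k y = 0) →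
          ∃ ξ ∈ Set.Ioo x y, G ξ = 0 := by
        intro x y hxy hFx hFy
        have hgx : g x = 0 := by
          have := hfact x; rw [hFx] at this
          exact (mul_eq_zero.mp this.symm).resolve_left (hf0 x)
        have hgy : g y = 0 := by
          have := hfact y; rw [hFy] at this
          exact (mul_eq_zero.mp this.symm).resolve_left (hf0 y)
        have hgc : ContinuousOn g (Set.Icc x y) :=
          (Differentiable.continuous fun t => (hgderiv t).differentiableAt).continuousOn
        obtain ⟨ξ, hξmem, hξ⟩ := exists_hasDerivAt_eq_zero hxy hgc (hgx.trans hgy.symm)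
          (fun t _ => hgderiv t)
        refine ⟨ξ, hξmem, ?_⟩
        have : finv ξ ≠ 0 := hfinv0 ξ
        exact (mul_eq_zero.mp hξ).resolve_left this
      -- conclude by counting
      by_contra hcard
      push_neg at hcard
      obtain ⟨t, hts, htc⟩ := Finset.exists_subset_card_eq (show n + 2 ≤ s.card by omega)
      set e := t.orderIsoOfFin htc with hedef
      have hmono : ∀ i j : Fin (n + 2), i < j → ((e i : ℝ)) < ((e j : ℝ)) := by
        intro i j hij
        exact_mod_cast e.strictMono hij
      have hzero : ∀ i : Fin (n + 2),
          ∑ k ∈ Finset.range (n + 1 + 1), c k * phiSysR f x₀ k ((e i : ℝ)) = 0 :=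
        fun i => hs _ (hts (e i).2)
      have hex : ∀ i : Fin (n + 1), ∃ ξ, ξ ∈ Set.Ioo ((e i.castSucc : ℝ)) ((e i.succ : ℝ))
          ∧ G ξ = 0 := by
        intro i
        exact hrolle _ _ (hmono _ _ (Fin.castSucc_lt_succ (i := i))) (hzero _) (hzero _)
      choose ξ hξmem hξzero using hex
      have hξmono : StrictMono ξ := by
        intro i j hij
        have h1 : ξ i < (e i.succ : ℝ) := (hξmem i).2
        have h2 : ((e i.succ : ℝ)) ≤ ((e j.castSucc : ℝ)) := by
          have : i.succ ≤ j.castSucc := by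
            rw [Fin.le_def]
            simp only [Fin.val_succ, Fin.coe_castSucc]
            exact hij
          exact_mod_cast e.monotone this
        have h3 : ((e j.castSucc : ℝ)) < ξ j := (hξmem j).1
        linarith
      set u : Finset ℝ := Finset.image ξ Finset.univ with hudef
      have hucard : u.card = n + 1 := by
        rw [hudef, Finset.card_image_of_injective _ hξmono.injective, Finset.card_univ,
          Fintype.card_fin]
      have := ih finv hfinvc hfinv0 x₀ c' hc'nz u (by
        intro x hx
        obtain ⟨i, _, rfl⟩ := Finset.mem_image.mp hx
        exact hξzero i)
      omega

lemma card_bound_to_set {Z : Set ℝ} {n : ℕ}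
    (h : ∀ t : Finset ℝ, (∀ x ∈ t, x ∈ Z) → t.card ≤ n) : Z.Finite ∧ Z.ncard ≤ n := by
  have hfin : Z.Finite := by
    by_contra hinf
    obtain ⟨t, hts, htc⟩ := (Set.Infinite.exists_subset_card_eq hinf (n + 1))
    have := h t (fun x hx => hts hx)
    omega
  refine ⟨hfin, ?_⟩
  rw [Set.ncard_eq_toFinset_card Z hfin]
  exact h _ (fun x hx => (Set.Finite.mem_toFinset hfin).mp hx)

end TchebAux

/-- Tchebyshev (Markov) system property: for real-valued nonvanishing continuous
`f` on `[-b,b]`, the functions `φ_0, …, φ_n` are linearly independent and every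
nontrivial linear combination has at most `n` zeros in `[-b,b]`. -/
theorem stmt_18 (b x₀ : ℝ) (hb : 0 < b) (hx₀ : x₀ ∈ Set.Icc (-b) b)
    (f : ℝ → ℝ) (hf : ContinuousOn f (Set.Icc (-b) b))
    (hf0 : ∀ x ∈ Set.Icc (-b) b, f x ≠ 0) (n : ℕ) :
    (∀ c : ℕ → ℝ,
        (∀ x ∈ Set.Icc (-b) b, ∑ k ∈ Finset.range (n + 1), c k * phiSysR f x₀ k x = 0) →
        ∀ k ≤ n, c k = 0) ∧
    (∀ c : ℕ → ℝ, (∃ k ≤ n, c k ≠ 0) →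
        {x ∈ Set.Icc (-b) b | ∑ k ∈ Finset.range (n + 1), c k * phiSysR f x₀ k x = 0}.Finite ∧
        {x ∈ Set.Icc (-b) b |
          ∑ k ∈ Finset.range (n + 1), c k * phiSysR f x₀ k x = 0}.ncard ≤ n) := by
  have hble : -b ≤ b := by linarith
  set ft : ℝ → ℝ := fun x => f ((Set.projIcc (-b) b hble x : ℝ)) with hftdef
  have hftc : Continuous ft :=
    hf.comp_continuous (continuous_subtype_val.comp (continuous_projIcc))
      (fun x => (Set.projIcc (-b) b hble x).2)
  have hft0 : ∀ x, ft x ≠ 0 := fun x => hf0 _ (Set.projIcc (-b) b hble x).2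
  have hEq : Set.EqOn ft f (Set.Icc (-b) b) := by
    intro x hx
    rw [hftdef]
    dsimp only
    rw [Set.projIcc_of_mem hble hx]
  have main : ∀ c : ℕ → ℝ, (∃ k ≤ n, c k ≠ 0) →
      {x ∈ Set.Icc (-b) b | ∑ k ∈ Finset.range (n + 1), c k * phiSysR f x₀ k x = 0}.Finite ∧
      {x ∈ Set.Icc (-b) b |
        ∑ k ∈ Finset.range (n + 1), c k * phiSysR f x₀ k x = 0}.ncard ≤ n := by
    intro c hc
    apply card_bound_to_set
    intro t ht
    obtain ⟨k, hk, hck⟩ := hc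
    apply key_lemma n ft hftc hft0 x₀ c ⟨k, hk, hck⟩ t
    intro x hx
    obtain ⟨hxI, hxF⟩ := ht x hx
    rw [← hxF]
    apply Finset.sum_congr rfl
    intro j _
    rw [phiSysR_congr ft f (-b) b x₀ hx₀ hEq j x hxI]
  refine ⟨?_, main⟩
  intro c hzero k hk
  by_contra hck
  obtain ⟨hfin, -⟩ := main c ⟨k, hk, hck⟩
  have hsub : Set.Icc (-b) b ⊆
      {x ∈ Set.Icc (-b) b | ∑ k ∈ Finset.range (n + 1), c k * phiSysR f x₀ k x = 0} :=
    fun x hx => ⟨hx, hzero x hx⟩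
  exact ((Set.Icc_infinite (by linarith : -b < b)).mono hsub) hfin
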